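/- There exist reals α, β with 0 ≤ α < 1 and β > 2 such that D(a) is bounded and D(b) is unbounded; consequently the associated subshift Σ does not have specification while still satisfying the hypothesis of the uniqueness theorem for equilibrium states. -/

import Mathlib

noncomputable section

namespace IntermediateBeta

/-- The intermediate beta transformation `x ↦ βx + α mod 1`. -/
def F (α β : ℝ) (x : ℝ) : ℝ := Int.fract (β * x + α)

/-- The digit sequence of a point: `Om α β x n` is the index `i` with `F^[n] x ∈ J_i`.
For `y ∈ [0,1)` we have `y ∈ J_i ↔ ⌊β y + α⌋ = i`. -/
def Om (α β : ℝ) (x : ℝ) : ℕ → ℕ := fun n => (⌊β * ((F α β)^[n] x) + α⌋).toNat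

/-- `ℓ = ⌈α + β⌉ - 1`. -/
def ell (α β : ℝ) : ℕ := ⌈α + β⌉₊ - 1

/-- The subshift `Σ`: closure (in the product topology) of the set of digit sequences
of points of `[0,1)`. -/
def Sig (α β : ℝ) : Set (ℕ → ℕ) := closure (Om α β '' Set.Ico (0 : ℝ) 1)

/-- The shift map. -/
def shift (x : ℕ → ℕ) : ℕ → ℕ := fun n => x (n + 1)

/-- Lexicographic order on one-sided sequences. -/
def lexLe (x y : ℕ → ℕ) : Prop := x = y ∨ ∃ k, (∀ i < k, x i = y i) ∧ x k < y k

/-- The language of a subset `S` of the full shift: the finite words occurring as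
initial segments of elements of `S`. -/
def langOf (S : Set (ℕ → ℕ)) (w : List ℕ) : Prop :=
  ∃ x ∈ S, ∀ i : Fin w.length, x i = w.get i

/-- Membership in the language `𝓛` of the subshift `Σ`. -/
def inLang (α β : ℝ) (w : List ℕ) : Prop := langOf (Sig α β) w

/-- The tail segment of `w` of length `k` agrees with the initial segment of `s`
of length `k`. -/
def tailAgrees (s : ℕ → ℕ) (w : List ℕ) (k : ℕ) : Prop :=
  k ≤ w.length ∧ ∀ i < k, w.getD (w.length - k + i) 0 = s i

/-- `kmax s w` is the length of the longest tail segment of `w` agreeing with an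
initial segment of `s` (`k₁(w)` when `s = a`, `k₂(w)` when `s = b`). -/
def kmax (s : ℕ → ℕ) (w : List ℕ) : ℕ := sSup {k | tailAgrees s w k}

/-- `D a b` is the set of lengths `n` such that the initial segment of `b` of
length `n` occurs somewhere in `a`.  Thus `D a b` is the set `𝖣(a)` of the paper
and `D b a` is `𝖣(b)`. -/
def D (a b : ℕ → ℕ) : Set ℕ := {n | ∃ j, ∀ i < n, b i = a (j + i)}

/-- Gluing of the words `w 0, v 0, w 1, v 1, …, v (n-1), w n`. -/
def glue {n : ℕ} (w : Fin (n + 1) → List ℕ) (v : Fin n → List ℕ) : List ℕ :=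
  (List.ofFn fun i : Fin n => w i.castSucc ++ v i).flatten ++ w (Fin.last n)

/-- A collection `G` of words inside the language `lang` has specification: there
is `τ ∈ ℕ` such that any finite list of words of `G` can be glued, with gluing
words from `lang` of length `τ`, into a word of `lang`. -/
def HasSpec (lang G : List ℕ → Prop) : Prop :=
  ∃ τ : ℕ, 1 ≤ τ ∧ ∀ n : ℕ, ∀ w : Fin (n + 1) → List ℕ, (∀ i, G (w i)) →
    ∃ v : Fin n → List ℕ, (∀ i, (v i).length = τ ∧ lang (v i)) ∧ lang (glue w v)

/-- The initial segment of a sequence, as a finite word. -/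
def pre (s : ℕ → ℕ) (n : ℕ) : List ℕ := List.ofFn fun i : Fin n => s i

/-- Lexicographic order for finite words (of equal length). -/
def wordLe (u v : List ℕ) : Prop :=
  u = v ∨ ∃ k, (∀ i < k, u.getD i 0 = v.getD i 0) ∧ u.getD k 0 < v.getD k 0

/-- Concatenation of a finite word with an infinite sequence. -/
def wcat (w : List ℕ) (x : ℕ → ℕ) : ℕ → ℕ := fun n =>
  if h : n < w.length then w.get ⟨n, h⟩ else x (n - w.length)

/-- digit sequence: 2, then indicator of powers of 2 -/
def bseq (n : ℕ) : ℕ := if n = 0 then 2 else if n = 2 ^ (Nat.log 2 n) then 1 else 0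

lemma bseq_zero : bseq 0 = 2 := rfl

lemma bseq_pow (k : ℕ) : bseq (2 ^ k) = 1 := by
  have h0 : (2:ℕ) ^ k ≠ 0 := (pow_pos (by norm_num : (0:ℕ) < 2) k).ne'
  simp [bseq, h0, Nat.log_pow (by norm_num : 1 < 2)]

lemma bseq_le (n : ℕ) : bseq n ≤ 2 := by
  unfold bseq; split <;> [rfl; skip]; split <;> omega

lemma bseq_le_one {n : ℕ} (h : n ≠ 0) : bseq n ≤ 1 := by
  unfold bseq; simp only [h, if_false]; split <;> omega

lemma bseq_eq_zero {n : ℕ} (h0 : n ≠ 0) (h : ∀ k, n ≠ 2 ^ k) : bseq n = 0 := by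
  unfold bseq; simp only [h0, if_false]; rw [if_neg (h _)]

/-- arbitrarily long zero runs -/
lemma bseq_runs (L : ℕ) : ∃ N, 1 ≤ N ∧ ∀ i, N ≤ i → i ≤ N + L → bseq i = 0 := by
  refine ⟨2 ^ (L + 2) + 1, Nat.le_add_left 1 _, fun i hi hi' => ?_⟩
  have hL : L + 1 < 2 ^ (L + 2) := by
    calc L + 1 < 2 ^ (L + 1) := Nat.lt_two_pow_self
    _ ≤ 2 ^ (L + 2) := Nat.pow_le_pow_right (by norm_num) (by omega)
  refine bseq_eq_zero (by omega) (fun k hk => ?_)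
  rcases le_or_gt k (L + 2) with h | h
  · have : 2 ^ k ≤ 2 ^ (L + 2) := Nat.pow_le_pow_right (by norm_num) h
    omega
  · have h1 : 2 ^ (L + 3) ≤ 2 ^ k := Nat.pow_le_pow_right (by norm_num) h
    have h2 : 2 ^ (L + 3) = 2 * 2 ^ (L + 2) := by ring
    omega

lemma summable_tail {β : ℝ} (hβ : 1 < β) (n : ℕ) :
    Summable (fun j : ℕ => (bseq (n + j) : ℝ) * (β⁻¹) ^ (j + 1)) := by
  have hβ0 : (0:ℝ) < β := by linarith
  have hr0 : (0:ℝ) ≤ β⁻¹ := by positivity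
  have hr1 : β⁻¹ < 1 := by
    rw [inv_lt_one_iff₀]; right; linarith
  have hg : Summable (fun j : ℕ => 2 * (β⁻¹) ^ (j + 1)) := by
    apply Summable.mul_left
    exact (summable_geometric_of_lt_one hr0 hr1).comp_injective (add_left_injective 1)
  refine Summable.of_nonneg_of_le (fun j => by positivity) (fun j => ?_) hg
  have : (bseq (n + j) : ℝ) ≤ 2 := by exact_mod_cast bseq_le _
  have hp : (0:ℝ) ≤ (β⁻¹) ^ (j + 1) := by positivity
  nlinarith

lemma exists_beta : ∃ β : ℝ, 2 < β ∧ β ≤ 3 ∧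
    ∑' j : ℕ, (bseq j : ℝ) * (β⁻¹) ^ (j + 1) = 1 := by
  set G : ℝ → ℝ := fun β => ∑' j : ℕ, (bseq j : ℝ) * (β⁻¹) ^ (j + 1) with hG
  have hsum : ∀ β : ℝ, 2 ≤ β → Summable (fun j : ℕ => (bseq j : ℝ) * (β⁻¹) ^ (j + 1)) := by
    intro β hb
    simpa using summable_tail (by linarith : (1:ℝ) < β) 0
  -- continuity on Icc 2 3
  have hcont : ContinuousOn G (Set.Icc (2:ℝ) 3) := by
    rw [continuousOn_iff_continuous_restrict]
    have : (Set.Icc (2:ℝ) 3).restrict G =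
        fun x : Set.Icc (2:ℝ) 3 => ∑' j : ℕ, (bseq j : ℝ) * (((x : ℝ))⁻¹) ^ (j + 1) := rfl
    change Continuous (fun x : Set.Icc (2:ℝ) 3 => ∑' j : ℕ, (bseq j : ℝ) * (((x : ℝ))⁻¹) ^ (j + 1))
    apply continuous_tsum (u := fun j : ℕ => 2 * (2⁻¹ : ℝ) ^ (j + 1))
    · intro j
      have hne : ∀ x : Set.Icc (2:ℝ) 3, (x : ℝ) ≠ 0 := fun x => by
        have := x.2.1; intro h; rw [h] at this; linarith
      exact continuous_const.mul ((continuous_subtype_val.inv₀ hne).pow _)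
    · apply Summable.mul_left
      exact (summable_geometric_of_lt_one (by norm_num) (by norm_num)).comp_injective
        (add_left_injective 1)
    · intro j x
      have hx2 : (2:ℝ) ≤ (x : ℝ) := x.2.1
      have hxinv : ((x:ℝ))⁻¹ ≤ 2⁻¹ := by
        apply inv_anti₀ <;> linarith
      have h0 : (0:ℝ) ≤ ((x:ℝ))⁻¹ := by positivity
      have hb2 : (bseq j : ℝ) ≤ 2 := by exact_mod_cast bseq_le j
      rw [Real.norm_eq_abs, abs_of_nonneg (by positivity)]
      have hp : ((x:ℝ))⁻¹ ^ (j+1) ≤ (2⁻¹:ℝ) ^ (j+1) := pow_le_pow_left₀ h0 hxinv _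
      have hp0 : (0:ℝ) ≤ ((x:ℝ))⁻¹ ^ (j+1) := by positivity
      nlinarith
  -- value at 2 is > 1
  have hG2 : 1 < G 2 := by
    have h2 : ∑ j ∈ Finset.range 2, (bseq j : ℝ) * ((2:ℝ)⁻¹) ^ (j + 1) ≤ G 2 :=
      Summable.sum_le_tsum _ (fun j _ => by positivity) (hsum 2 le_rfl)
    have hb1 : bseq 1 = 1 := by simpa using bseq_pow 0
    rw [Finset.sum_range_succ, Finset.sum_range_one, bseq_zero, hb1] at h2
    norm_num at h2
    linarith
  -- value at 3 is < 1
  have hG3 : G 3 < 1 := by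
    have hmaj : G 3 ≤ ∑' j : ℕ, (((3:ℝ)⁻¹) ^ (j + 1) + (if j = 0 then (3:ℝ)⁻¹ else 0)) := by
      apply Summable.tsum_le_tsum _ (hsum 3 (by norm_num))
      · apply Summable.add
        · exact (summable_geometric_of_lt_one (by norm_num) (by norm_num)).comp_injective
            (add_left_injective 1)
        · exact summable_of_ne_finset_zero (s := {0}) (fun j hj => by
            simp at hj; simp [hj])
      · intro j
        rcases Nat.eq_zero_or_pos j with h | h
        · subst h; rw [bseq_zero]; norm_num
        · have : (bseq j : ℝ) ≤ 1 := by exact_mod_cast bseq_le_one (by omega)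
          have hp : (0:ℝ) ≤ ((3:ℝ)⁻¹) ^ (j+1) := by positivity
          have : (bseq j : ℝ) * ((3:ℝ)⁻¹) ^ (j + 1) ≤ 1 * ((3:ℝ)⁻¹) ^ (j + 1) := by
            apply mul_le_mul_of_nonneg_right this hp
          simp only [if_neg (by omega : j ≠ 0)]
          linarith
    have hval : ∑' j : ℕ, (((3:ℝ)⁻¹) ^ (j + 1) + (if j = 0 then (3:ℝ)⁻¹ else 0))
        = (1/2 : ℝ) + 3⁻¹ := by
      rw [Summable.tsum_add]
      · congr 1
        · have : ∀ j : ℕ, ((3:ℝ)⁻¹) ^ (j + 1) = 3⁻¹ * ((3:ℝ)⁻¹) ^ j := fun j => by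
            rw [pow_succ]; ring
          rw [tsum_congr this, tsum_mul_left, tsum_geometric_of_lt_one (by norm_num) (by norm_num)]
          norm_num
        · exact tsum_ite_eq (0:ℕ) (fun _ => (3:ℝ)⁻¹)
      · exact (summable_geometric_of_lt_one (by norm_num) (by norm_num)).comp_injective
          (add_left_injective 1)
      · exact summable_of_ne_finset_zero (s := {0}) (fun j hj => by
          simp at hj; simp [hj])
    rw [hval] at hmaj
    norm_num at hmaj ⊢
    linarith
  -- intermediate value
  have hIVT := intermediate_value_Icc' (by norm_num : (2:ℝ) ≤ 3) hcont
  have h1mem : (1:ℝ) ∈ Set.Icc (G 3) (G 2) := ⟨le_of_lt hG3, le_of_lt hG2⟩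
  obtain ⟨β, hβmem, hβval⟩ := hIVT h1mem
  refine ⟨β, ?_, hβmem.2, hβval⟩
  rcases eq_or_lt_of_le hβmem.1 with h | h
  · exfalso; rw [← h] at hβval; rw [hβval] at hG2; exact lt_irrefl _ hG2
  · exact h

noncomputable def tfun (β : ℝ) (n : ℕ) : ℝ := ∑' j : ℕ, (bseq (n + j) : ℝ) * (β⁻¹) ^ (j + 1)

lemma tfun_rec {β : ℝ} (hβ : 2 < β) (n : ℕ) :
    tfun β (n + 1) = β * tfun β n - bseq n := by
  have hβ0 : β ≠ 0 := by positivity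
  have hs := summable_tail (by linarith : (1:ℝ) < β) n
  have h1 : tfun β n = (bseq n : ℝ) * β⁻¹ +
      ∑' j : ℕ, (bseq (n + (j + 1)) : ℝ) * (β⁻¹) ^ (j + 1 + 1) := by
    rw [tfun, Summable.tsum_eq_zero_add hs]; simp
  have h2 : ∑' j : ℕ, (bseq (n + (j + 1)) : ℝ) * (β⁻¹) ^ (j + 1 + 1)
      = β⁻¹ * tfun β (n + 1) := by
    rw [tfun, ← tsum_mul_left]
    apply tsum_congr; intro j
    have : n + (j + 1) = n + 1 + j := by omega
    rw [this, pow_succ]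
    ring
  rw [h2] at h1
  field_simp at h1 ⊢
  linarith [h1]

lemma tfun_pos {β : ℝ} (hβ : 2 < β) (n : ℕ) : 0 < tfun β n := by
  have hβ0 : (0:ℝ) < β := by linarith
  have hs := summable_tail (by linarith : (1:ℝ) < β) n
  have hn : n ≤ 2 ^ (n + 1) := le_of_lt (Nat.lt_of_lt_of_le (Nat.lt_two_pow_self (n := n))
    (Nat.pow_le_pow_right (by norm_num) (by omega)))
  set j0 := 2 ^ (n + 1) - n with hj0
  have hidx : n + j0 = 2 ^ (n + 1) := by omega
  have hterm : (bseq (n + j0) : ℝ) * (β⁻¹) ^ (j0 + 1) = (β⁻¹) ^ (j0 + 1) := by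
    rw [hidx, bseq_pow]; norm_num
  have hle : (bseq (n + j0) : ℝ) * (β⁻¹) ^ (j0 + 1) ≤ tfun β n :=
    Summable.le_tsum hs j0 (fun i _ => by positivity)
  rw [hterm] at hle
  have : (0:ℝ) < (β⁻¹) ^ (j0 + 1) := by positivity
  linarith

lemma tfun_le_one {β : ℝ} (hβ : 2 < β)
    (hroot : ∑' j : ℕ, (bseq j : ℝ) * (β⁻¹) ^ (j + 1) = 1) (n : ℕ) :
    tfun β n ≤ 1 := by
  rcases Nat.eq_zero_or_pos n with h | h
  · subst h
    have : tfun β 0 = ∑' j : ℕ, (bseq j : ℝ) * (β⁻¹) ^ (j + 1) := by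
      rw [tfun]; apply tsum_congr; intro j; rw [Nat.zero_add]
    rw [this, hroot]
  · have hβ0 : (0:ℝ) < β := by linarith
    have hr0 : (0:ℝ) < β⁻¹ := by positivity
    have hr2 : β⁻¹ ≤ 2⁻¹ := by
      apply inv_anti₀ <;> linarith
    have hgeom : Summable (fun j : ℕ => (β⁻¹ : ℝ) ^ (j + 1)) :=
      (summable_geometric_of_lt_one (le_of_lt hr0) (by
        rw [inv_lt_one_iff₀]; right; linarith)).comp_injective (add_left_injective 1)
    have hle : tfun β n ≤ ∑' j : ℕ, (β⁻¹ : ℝ) ^ (j + 1) := by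
      apply Summable.tsum_le_tsum _ (summable_tail (by linarith) n) hgeom
      intro j
      have hb : (bseq (n + j) : ℝ) ≤ 1 := by exact_mod_cast bseq_le_one (by omega)
      have hp : (0:ℝ) ≤ (β⁻¹) ^ (j + 1) := by positivity
      nlinarith
    have hval : ∑' j : ℕ, (β⁻¹ : ℝ) ^ (j + 1) = β⁻¹ * (1 - β⁻¹)⁻¹ := by
      have : ∀ j : ℕ, (β⁻¹:ℝ) ^ (j + 1) = β⁻¹ * (β⁻¹) ^ j := fun j => by
        rw [pow_succ]; ring
      rw [tsum_congr this, tsum_mul_left,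
        tsum_geometric_of_lt_one (le_of_lt hr0) (by rw [inv_lt_one_iff₀]; right; linarith)]
    have h12 : (1:ℝ) - β⁻¹ ≥ 2⁻¹ := by linarith
    have hinv : ((1:ℝ) - β⁻¹)⁻¹ ≤ 2 := by
      have := inv_anti₀ (by norm_num : (0:ℝ) < 2⁻¹) h12
      simpa using this
    have : β⁻¹ * (1 - β⁻¹)⁻¹ ≤ 2⁻¹ * 2 := by
      apply mul_le_mul hr2 hinv (by positivity) (by norm_num)
    rw [hval] at hle
    norm_num at this
    linarith

-- ==================== dynamics lemmas ====================

lemma F_iter_nonneg {β x : ℝ} (hx : 0 ≤ x) (n : ℕ) : 0 ≤ (F 0 β)^[n] x := by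
  cases n with
  | zero => simpa using hx
  | succ n =>
    rw [Function.iterate_succ_apply']
    exact Int.fract_nonneg _

lemma Om_eq_iff {β x : ℝ} (hβ : 0 < β) (hx : 0 ≤ x) (n : ℕ) (c : ℕ) :
    Om 0 β x n = c ↔ ⌊β * ((F 0 β)^[n] x) + 0⌋ = (c : ℤ) := by
  have hy : 0 ≤ (F 0 β)^[n] x := F_iter_nonneg hx n
  have hz : (0:ℝ) ≤ β * ((F 0 β)^[n] x) + 0 := by positivity
  have hfl : 0 ≤ ⌊β * ((F 0 β)^[n] x) + 0⌋ := Int.floor_nonneg.2 hz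
  simp only [Om]
  constructor
  · intro h; rw [← h, Int.toNat_of_nonneg hfl]
  · intro h; rw [h]; simp

/-- Key remainder estimate along iterates. -/
lemma iter_lt {β : ℝ} (hβ : 2 < β) (b : ℕ → ℕ) (t : ℕ → ℝ)
    (hrec : ∀ n, t (n + 1) = β * t n - b n)
    {x : ℝ} (hx0 : 0 ≤ x) (hx1 : x < t 0) :
    ∀ n, (∀ i < n, Om 0 β x i = b i) → (F 0 β)^[n] x < t n := by
  intro n
  induction n with
  | zero => intro _; simpa using hx1
  | succ n ih =>
    intro h
    have hy1 : (F 0 β)^[n] x < t n := ih (fun i hi => h i (by omega))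
    have hy0 : 0 ≤ (F 0 β)^[n] x := F_iter_nonneg hx0 n
    have hd : ⌊β * ((F 0 β)^[n] x) + 0⌋ = (b n : ℤ) :=
      (Om_eq_iff (by linarith) hx0 n (b n)).1 (h n (by omega))
    rw [Function.iterate_succ_apply', F, Int.fract, hd, hrec]
    push_cast
    have : β * ((F 0 β)^[n] x) < β * t n :=
      mul_lt_mul_of_pos_left hy1 (by linarith)
    linarith

/-- Lexicographic maximality of `b` over itineraries of points of `[0,1)`. -/
lemma lexmax_of_points {β : ℝ} (hβ : 2 < β) (b : ℕ → ℕ) (t : ℕ → ℝ)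
    (ht0 : t 0 = 1) (hrec : ∀ n, t (n + 1) = β * t n - b n)
    (hle : ∀ n, t n ≤ 1) :
    ∀ x ∈ Set.Ico (0:ℝ) 1, lexLe (Om 0 β x) b := by
  rintro x ⟨hx0, hx1⟩
  by_cases heq : Om 0 β x = b
  · exact Or.inl heq
  · right
    have hex : ∃ k, Om 0 β x k ≠ b k := by
      by_contra h; push_neg at h; exact heq (funext h)
    classical
    set k := Nat.find hex with hk
    have hkne : Om 0 β x k ≠ b k := Nat.find_spec hex
    have hagree : ∀ i < k, Om 0 β x i = b i := fun i hi => by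
      by_contra h; exact Nat.lt_irrefl _ (Nat.lt_of_lt_of_le hi (Nat.find_le h))
    refine ⟨k, hagree, ?_⟩
    have hy1 : (F 0 β)^[k] x < t k :=
      iter_lt hβ b t hrec hx0 (by rw [ht0]; exact hx1) k hagree
    have hy0 : 0 ≤ (F 0 β)^[k] x := F_iter_nonneg hx0 k
    have hz : β * ((F 0 β)^[k] x) + 0 < (b k : ℝ) + 1 := by
      have h1 : β * ((F 0 β)^[k] x) < β * t k :=
        mul_lt_mul_of_pos_left hy1 (by linarith)
      have h2 : β * t k = (b k : ℝ) + t (k + 1) := by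
        have := hrec k; linarith
      have h3 := hle (k + 1)
      linarith
    have hfl : ⌊β * ((F 0 β)^[k] x) + 0⌋ < (b k : ℤ) + 1 := by
      rw [Int.floor_lt]; push_cast; exact hz
    have hfl0 : 0 ≤ ⌊β * ((F 0 β)^[k] x) + 0⌋ :=
      Int.floor_nonneg.2 (by positivity)
    have hlek : Om 0 β x k ≤ b k := by
      simp only [Om]; omega
    omega

/-- The set of sequences lexicographically `≤ b` is closed. -/
lemma isClosed_lexLe (b : ℕ → ℕ) : IsClosed {x : ℕ → ℕ | lexLe x b} := by
  rw [← isOpen_compl_iff, isOpen_iff_mem_nhds]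
  intro x hx
  simp only [Set.mem_compl_iff, Set.mem_setOf_eq] at hx
  have hxne : x ≠ b := fun h => hx (Or.inl h)
  have hex : ∃ k, x k ≠ b k := by
    by_contra h; push_neg at h; exact hxne (funext h)
  classical
  set k := Nat.find hex with hk
  have hkne : x k ≠ b k := Nat.find_spec hex
  have hagree : ∀ i < k, x i = b i := fun i hi => by
    by_contra h; exact Nat.lt_irrefl _ (Nat.lt_of_lt_of_le hi (Nat.find_le h))
  have hgt : b k < x k := by
    rcases Nat.lt_or_ge (x k) (b k) with h | h
    · exact absurd (Or.inr ⟨k, hagree, h⟩) hx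
    · omega
  have hUopen : IsOpen (⋂ i ∈ Finset.range (k+1), (fun y : ℕ → ℕ => y i) ⁻¹' {x i}) :=
    isOpen_biInter_finset fun i _ => (isOpen_discrete _).preimage (continuous_apply i)
  refine Filter.mem_of_superset (hUopen.mem_nhds ?_) ?_
  · simp
  · intro y hy
    simp only [Set.mem_iInter, Set.mem_preimage, Set.mem_singleton_iff,
      Finset.mem_range] at hy
    have hyx : ∀ i ≤ k, y i = x i := fun i hi => hy i (by omega)
    simp only [Set.mem_compl_iff, Set.mem_setOf_eq]
    rintro (rfl | ⟨k', hk'agree, hk'lt⟩)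
    · exact hkne (hyx k le_rfl).symm
    · rcases Nat.lt_trichotomy k' k with h | rfl | h
      · rw [hyx k' (le_of_lt h), hagree k' h] at hk'lt; omega
      · rw [hyx k le_rfl] at hk'lt; omega
      · have h1 : y k = b k := hk'agree k h
        have h2 : y k = x k := hyx k le_rfl
        omega

/-- Realization of prefixes of `b` by points in `[0,1)`. -/
lemma prefix_realizable {β : ℝ} (hβ : 2 < β) (b : ℕ → ℕ) (t : ℕ → ℝ)
    (ht0 : t 0 = 1) (hrec : ∀ n, t (n + 1) = β * t n - b n)
    (hpos : ∀ n, 0 < t n) (hle : ∀ n, t n ≤ 1) (m : ℕ) :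
    ∃ x ∈ Set.Ico (0:ℝ) 1, ∀ n < m, Om 0 β x n = b n := by
  have hβ0 : (0:ℝ) < β := by linarith
  classical
  obtain ⟨n0, hn0mem, hn0min⟩ :=
    (Finset.range (m+1)).exists_min_image (fun n => t n / β ^ n) ⟨0, by simp⟩
  set c := t n0 / β ^ n0 with hc
  have hcpos : 0 < c := div_pos (hpos n0) (by positivity)
  set δ := c / 2 with hδ
  have hδpos : 0 < δ := by positivity
  have hδlt : ∀ n ≤ m, β ^ n * δ < t n := by
    intro n hn
    have h1 : c ≤ t n / β ^ n := hn0min n (Finset.mem_range.2 (by omega))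
    have h2 : δ < t n / β ^ n := by rw [hδ]; linarith
    have hb : (0:ℝ) < β ^ n := by positivity
    calc β ^ n * δ < β ^ n * (t n / β ^ n) :=
          mul_lt_mul_of_pos_left h2 hb
    _ = t n := by field_simp
  have hδ1 : δ < 1 := by
    have := hδlt 0 (by omega)
    simp only [pow_zero, one_mul] at this
    linarith [hle 0]
  set x := 1 - δ with hx
  have hx0 : 0 ≤ x := by rw [hx]; linarith
  have hx1 : x < 1 := by rw [hx]; linarith
  -- the floor computation
  have hfl : ∀ n, n + 1 ≤ m → ⌊β * (t n - β ^ n * δ) + 0⌋ = (b n : ℤ) := by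
    intro n hn
    have hlow : (b n : ℝ) ≤ β * (t n - β ^ n * δ) + 0 := by
      have h1 : β ^ (n+1) * δ < t (n + 1) := hδlt (n+1) hn
      have h2 := hrec n
      have : β * (t n - β ^ n * δ) = β * t n - β ^ (n+1) * δ := by ring
      rw [this]
      linarith
    have hhigh : β * (t n - β ^ n * δ) + 0 < (b n : ℝ) + 1 := by
      have h2 := hrec n
      have h3 := hle (n+1)
      have h4 : (0:ℝ) < β ^ (n+1) * δ := by positivity
      have : β * (t n - β ^ n * δ) = β * t n - β ^ (n+1) * δ := by ring
      rw [this]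
      linarith
    rw [Int.floor_eq_iff]
    push_cast
    constructor
    · exact_mod_cast hlow
    · exact_mod_cast hhigh
  -- the iterates
  have hiter : ∀ n, n ≤ m → (F 0 β)^[n] x = t n - β ^ n * δ := by
    intro n
    induction n with
    | zero => intro _; simp [hx, ht0]
    | succ n ih =>
      intro hn
      have hv := ih (by omega)
      rw [Function.iterate_succ_apply', hv, F, Int.fract, hfl n hn, hrec]
      push_cast
      ring
  refine ⟨x, ⟨hx0, hx1⟩, fun n hn => ?_⟩
  rw [Om_eq_iff hβ0 hx0 n (b n), hiter n (by omega), hfl n (by omega)]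

/-- `b` belongs to the subshift. -/
lemma mem_Sig_of_realizable {β : ℝ} (b : ℕ → ℕ)
    (h : ∀ m, ∃ x ∈ Set.Ico (0:ℝ) 1, ∀ n < m, Om 0 β x n = b n) :
    b ∈ Sig 0 β := by
  classical
  choose xs hmem hdig using h
  have htend : Filter.Tendsto (fun m => Om 0 β (xs m)) Filter.atTop (nhds b) := by
    rw [tendsto_pi_nhds]
    intro n
    apply tendsto_atTop_of_eventually_const (i₀ := n + 1)
    intro m hm
    exact hdig m n (by omega)
  exact mem_closure_of_tendsto htend
    (Filter.Eventually.of_forall fun m => Set.mem_image_of_mem _ (hmem m))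

lemma Om_zero_eq (β : ℝ) : Om 0 β 0 = fun _ => 0 := by
  funext n
  have hiter : (F 0 β)^[n] 0 = 0 := by
    apply Function.iterate_fixed
    simp [F]
  simp [Om, hiter]

lemma pre_length (s : ℕ → ℕ) (n : ℕ) : (pre s n).length = n := by
  simp [pre]

lemma pre_get (s : ℕ → ℕ) (n : ℕ) (i : ℕ) (h : i < (pre s n).length) :
    (pre s n).get ⟨i, h⟩ = s i := by
  simp [pre]

/-- Failure of specification, from maximality and long zero runs of `b`. -/
lemma not_hasSpec {β : ℝ} (b : ℕ → ℕ)
    (hbmem : b ∈ Sig 0 β) (hmax : ∀ x ∈ Sig 0 β, lexLe x b)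
    (hb0 : b 0 ≠ 0)
    (hruns : ∀ L, ∃ N, 1 ≤ N ∧ ∀ i, N ≤ i → i ≤ N + L → b i = 0) :
    ¬ HasSpec (inLang 0 β) (inLang 0 β) := by
  rintro ⟨τ, hτ, hspec⟩
  obtain ⟨N, hN1, hNrun⟩ := hruns τ
  have hpreLang : ∀ M, inLang 0 β (pre b M) := by
    intro M
    refine ⟨b, hbmem, fun i => ?_⟩
    rw [pre_get]
  obtain ⟨v, hv, hglue⟩ := hspec 1 (fun _ => pre b N) (fun _ => hpreLang N)
  obtain ⟨x, hxmem, hxpre⟩ := hglue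
  -- compute the glue word
  have hglue_eq : glue (fun _ : Fin 2 => pre b N) v = (pre b N ++ v 0) ++ pre b N := by
    simp [glue]
  have hvlen : (v 0).length = τ := (hv 0).1
  have hlen : (glue (fun _ : Fin 2 => pre b N) v).length = N + τ + N := by
    rw [hglue_eq]
    simp only [List.length_append, pre_length, hvlen]
  -- x agrees with b on [0, N)
  have hxb : ∀ i, i < N → x i = b i := by
    intro i hi
    have hilen : i < (glue (fun _ : Fin 2 => pre b N) v).length := by omega
    have := hxpre ⟨i, hilen⟩
    simp only at this
    rw [this]
    have h1 : i < (pre b N ++ v 0).length := by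
      simp [pre_length, hvlen]; omega
    rw [List.get_eq_getElem]
    simp only [hglue_eq]
    rw [List.getElem_append_left h1, List.getElem_append_left (by simp [pre_length]; omega)]
    have := pre_get b N i (by simp [pre_length]; omega)
    rw [List.get_eq_getElem] at this
    exact this
  -- x at position N + τ is b 0
  have hxNτ : x (N + τ) = b 0 := by
    have hilen : N + τ < (glue (fun _ : Fin 2 => pre b N) v).length := by omega
    have := hxpre ⟨N + τ, hilen⟩
    simp only at this
    rw [this, List.get_eq_getElem]
    simp only [hglue_eq]
    have h1 : (pre b N ++ v 0).length ≤ N + τ := by simp [pre_length, hvlen]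
    rw [List.getElem_append_right h1]
    have h2 : N + τ - (pre b N ++ v 0).length = 0 := by simp [pre_length, hvlen]
    simp only [h2]
    have := pre_get b N 0 (by simp [pre_length]; omega)
    rw [List.get_eq_getElem] at this
    exact this
  -- lexicographic comparison gives a contradiction
  rcases hmax x hxmem with rfl | ⟨k, hkagree, hklt⟩
  · have h1 : x (N + τ) = 0 := hNrun (N + τ) (by omega) (by omega)
    rw [hxNτ] at h1
    exact hb0 h1
  · rcases Nat.lt_trichotomy k N with h | rfl | h
    · rw [hxb k h] at hklt; omega
    · have : b k = 0 := hNrun k le_rfl (by omega)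
      omega
    · rcases Nat.lt_or_ge k (N + τ + 1) with h2 | h2
      · have : b k = 0 := hNrun k (by omega) (by omega)
        omega
      · have := hkagree (N + τ) (by omega)
        rw [hxNτ] at this
        have h3 : b (N + τ) = 0 := hNrun (N + τ) (by omega) (by omega)
        omega

/-- **Example.** There exist `0 ≤ α < 1` and `β > 2` such that `𝖣(a)` is bounded
while `𝖣(b)` is unbounded; consequently the associated subshift `Σ` does not
have specification while still satisfying the hypothesis of the uniqueness
theorem for equilibrium states. -/
theorem exists_bounded_Da_unbounded_Db :
    ∃ α β : ℝ, 0 ≤ α ∧ α < 1 ∧ 2 < β ∧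
      ∃ b : ℕ → ℕ, b ∈ Sig α β ∧ (∀ x ∈ Sig α β, lexLe x b) ∧
        BddAbove (D (Om α β 0) b) ∧ ¬ BddAbove (D b (Om α β 0)) ∧
        ¬ HasSpec (inLang α β) (inLang α β) := by
  obtain ⟨β, hβ, hβ3, hroot⟩ := exists_beta
  have ht0 : tfun β 0 = 1 := by
    rw [tfun, ← hroot]
    apply tsum_congr; intro j; rw [Nat.zero_add]
  have hrec : ∀ n, tfun β (n + 1) = β * tfun β n - bseq n := tfun_rec hβ
  have hpos : ∀ n, 0 < tfun β n := tfun_pos hβ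
  have hle : ∀ n, tfun β n ≤ 1 := tfun_le_one hβ hroot
  have hmax : ∀ x ∈ Sig 0 β, lexLe x bseq := by
    intro x hx
    have hclosed := isClosed_lexLe bseq
    have hsub : Om 0 β '' Set.Ico (0:ℝ) 1 ⊆ {y : ℕ → ℕ | lexLe y bseq} := by
      rintro _ ⟨z, hz, rfl⟩
      exact lexmax_of_points hβ bseq (tfun β) ht0 hrec hle z hz
    exact (closure_minimal hsub hclosed) hx
  have hbmem : bseq ∈ Sig 0 β :=
    mem_Sig_of_realizable bseq
      (fun m => prefix_realizable hβ bseq (tfun β) ht0 hrec hpos hle m)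
  have ha : Om 0 β 0 = fun _ => 0 := Om_zero_eq β
  refine ⟨0, β, le_refl 0, by norm_num, hβ, bseq, hbmem, hmax, ?_, ?_, ?_⟩
  · -- D a b is bounded (by 0)
    refine ⟨0, fun n hn => ?_⟩
    simp only [D, Set.mem_setOf_eq] at hn
    obtain ⟨j, hj⟩ := hn
    by_contra h
    have h1 : 0 < n := by omega
    have := hj 0 h1
    rw [ha] at this
    simp [bseq_zero] at this
  · -- D b a is unbounded
    intro hbdd
    obtain ⟨M, hM⟩ := hbdd
    obtain ⟨N, hN1, hNrun⟩ := bseq_runs M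
    have hmem : (M + 1) ∈ D bseq (Om 0 β 0) := by
      refine ⟨N, fun i hi => ?_⟩
      rw [ha]
      exact (hNrun (N + i) (by omega) (by omega)).symm
    have := hM hmem
    omega
  · exact not_hasSpec bseq hbmem hmax (by rw [bseq_zero]; omega) bseq_runs

end IntermediateBeta
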